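/- Fix real numbers ℓ₁, …, ℓ_n, not all equal, and δ > 0. If there exists β* ∈ (-∞, -max_i ℓ_i) with Ψ(β*) = 0, then β* is the unique such root. -/

import Mathlib

open Finset

private lemma cs_strict {n : ℕ} (y : Fin n → ℝ) {i j : Fin n} (hij : y i ≠ y j) :
    (∑ k, y k) ^ 2 < (n : ℝ) * ∑ k, (y k) ^ 2 := by
  have key : ∑ a : Fin n, ∑ b : Fin n, (y a - y b) ^ 2
      = 2 * ((n : ℝ) * ∑ k, (y k) ^ 2 - (∑ k, y k) ^ 2) := by
    have hexp : ∀ a : Fin n, ∑ b : Fin n, (y a - y b) ^ 2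
        = (n : ℝ) * y a ^ 2 - 2 * (y a * ∑ b : Fin n, y b) + ∑ b : Fin n, y b ^ 2 := by
      intro a
      have h : ∀ b : Fin n, (y a - y b) ^ 2
          = y a ^ 2 - 2 * (y a * y b) + y b ^ 2 := fun b => by ring
      rw [Finset.sum_congr rfl fun b _ => h b, Finset.sum_add_distrib,
        Finset.sum_sub_distrib, Finset.sum_const, Finset.card_univ,
        Fintype.card_fin, nsmul_eq_mul, ← Finset.mul_sum, ← Finset.mul_sum]
    rw [Finset.sum_congr rfl fun a _ => hexp a, Finset.sum_add_distrib,
      Finset.sum_sub_distrib, ← Finset.mul_sum, ← Finset.mul_sum,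
      ← Finset.sum_mul, Finset.sum_const, Finset.card_univ, Fintype.card_fin,
      nsmul_eq_mul]
    ring
  have hterm : 0 < (y i - y j) ^ 2 := by
    have h := sub_ne_zero.mpr hij
    positivity
  have hpos : 0 < ∑ a : Fin n, ∑ b : Fin n, (y a - y b) ^ 2 := by
    refine Finset.sum_pos' (fun a _ => Finset.sum_nonneg fun b _ => sq_nonneg _)
      ⟨i, Finset.mem_univ i, ?_⟩
    exact Finset.sum_pos' (fun b _ => sq_nonneg _) ⟨j, Finset.mem_univ j, hterm⟩
  linarith

/-- Uniqueness of the root of `Ψ` on `(-∞, -max ℓ i)`: if the losses are not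
all equal and `δ > 0`, then any two roots of `Ψ` in the domain coincide. -/
theorem stmt_16 (n : ℕ) (hn : 0 < n) (ℓ : Fin n → ℝ)
    (hne : ¬ ∀ i j, ℓ i = ℓ j) (δ : ℝ) (hδ : 0 < δ)
    (β₁ β₂ : ℝ) (hβ₁ : ∀ i, β₁ < -ℓ i) (hβ₂ : ∀ i, β₂ < -ℓ i)
    (hroot₁ : (1 / (n : ℝ)) * ∑ i, Real.log (-1 / (ℓ i + β₁)) -
        Real.log ((1 / (n : ℝ)) * ∑ i, -1 / (ℓ i + β₁)) + δ = 0)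
    (hroot₂ : (1 / (n : ℝ)) * ∑ i, Real.log (-1 / (ℓ i + β₂)) -
        Real.log ((1 / (n : ℝ)) * ∑ i, -1 / (ℓ i + β₂)) + δ = 0) :
    β₁ = β₂ := by
  haveI : NeZero n := ⟨hn.ne'⟩
  have hncast : (0 : ℝ) < n := by exact_mod_cast hn
  set S : Set ℝ := ⋂ i : Fin n, Set.Iio (-ℓ i) with hSdef
  have hmemS : ∀ β : ℝ, β ∈ S ↔ ∀ i, β < -ℓ i := by
    intro β; simp [hSdef, Set.mem_iInter]
  set G : ℝ → ℝ := fun β =>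
    (1 / (n : ℝ)) * ∑ i, Real.log (-(ℓ i + β)) + Real.log (∑ i, -1 / (ℓ i + β))
    with hGdef
  -- basic pointwise facts on the domain
  have hneg : ∀ β : ℝ, (∀ i, β < -ℓ i) → ∀ i, ℓ i + β < 0 := by
    intro β hβ i; have := hβ i; linarith
  have hy : ∀ β : ℝ, (∀ i, β < -ℓ i) → ∀ i, 0 < -1 / (ℓ i + β) := by
    intro β hβ i
    have h1 : ℓ i + β < 0 := hneg β hβ i
    have h2 : -1 / (ℓ i + β) = 1 / (-(ℓ i + β)) := by
      rw [div_eq_div_iff h1.ne (by linarith : -(ℓ i + β) ≠ 0)]; ring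
    rw [h2]
    exact div_pos one_pos (by linarith)
  have hSy : ∀ β : ℝ, (∀ i, β < -ℓ i) → 0 < ∑ i, -1 / (ℓ i + β) := by
    intro β hβ
    exact Finset.sum_pos (fun i _ => hy β hβ i) Finset.univ_nonempty
  -- derivative of G
  have hderiv : ∀ β : ℝ, (∀ i, β < -ℓ i) → HasDerivAt G
      ((1 / (n : ℝ)) * ∑ i, (ℓ i + β)⁻¹ +
        (∑ i, ((ℓ i + β) ^ 2)⁻¹) / (∑ i, -1 / (ℓ i + β))) β := by
    intro β hβ
    have hne0 : ∀ i, ℓ i + β ≠ 0 := fun i => (hneg β hβ i).ne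
    have hadd : ∀ i : Fin n, HasDerivAt (fun b => ℓ i + b) 1 β :=
      fun i => (hasDerivAt_id β).const_add (ℓ i)
    have hlog : ∀ i : Fin n,
        HasDerivAt (fun b => Real.log (-(ℓ i + b))) ((ℓ i + β)⁻¹) β := by
      intro i
      have hz : -(ℓ i + β) ≠ 0 := by
        have := hne0 i; intro hc; apply this; linarith
      have h := ((hadd i).neg).log hz
      convert h using 1
      · rfl
      · show (ℓ i + β)⁻¹ = -1 / -(ℓ i + β)
        rw [neg_div_neg_eq, one_div]
    have hinv : ∀ i : Fin n,
        HasDerivAt (fun b => -1 / (ℓ i + b)) (((ℓ i + β) ^ 2)⁻¹) β := by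
      intro i
      have h := ((hadd i).inv (hne0 i)).neg
      have heq : (-(fun b => ℓ i + b)⁻¹) = (fun b => -1 / (ℓ i + b)) := by
        funext b; simp only [Pi.neg_apply, Pi.inv_apply]; rw [neg_div, one_div]
      rw [heq] at h
      exact h.congr_deriv (by rw [neg_div, neg_neg, one_div, ← inv_pow])
    have hsum1 : HasDerivAt (fun b => ∑ i, Real.log (-(ℓ i + b)))
        (∑ i, (ℓ i + β)⁻¹) β := HasDerivAt.fun_sum (fun i _ => hlog i)
    have hsum2 : HasDerivAt (fun b => ∑ i, -1 / (ℓ i + b))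
        (∑ i, ((ℓ i + β) ^ 2)⁻¹) β := HasDerivAt.fun_sum (fun i _ => hinv i)
    have hlogsum := hsum2.log (hSy β hβ).ne'
    exact (hsum1.const_mul (1 / (n : ℝ))).add hlogsum
  -- positivity of the derivative
  have hpos : ∀ β : ℝ, (∀ i, β < -ℓ i) →
      0 < (1 / (n : ℝ)) * ∑ i, (ℓ i + β)⁻¹ +
        (∑ i, ((ℓ i + β) ^ 2)⁻¹) / (∑ i, -1 / (ℓ i + β)) := by
    intro β hβ
    have hne0 : ∀ i, ℓ i + β ≠ 0 := fun i => (hneg β hβ i).ne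
    set y : Fin n → ℝ := fun i => -1 / (ℓ i + β) with hydef
    have hyinv : ∀ i, (ℓ i + β)⁻¹ = -y i := by
      intro i; simp only [hydef]; field_simp
    have hysq : ∀ i, ((ℓ i + β) ^ 2)⁻¹ = (y i) ^ 2 := by
      intro i; simp only [hydef]; field_simp [sq]
    have hSpos : 0 < ∑ i, y i := hSy β hβ
    obtain ⟨i, j, hij⟩ : ∃ i j, ℓ i ≠ ℓ j := by
      by_contra h; push_neg at h; exact hne h
    have hyij : y i ≠ y j := by
      intro h
      apply hij
      have hinveq : (ℓ i + β)⁻¹ = (ℓ j + β)⁻¹ := by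
        have hi := hyinv i; have hj := hyinv j
        rw [hi, hj, h]
      have := inv_injective hinveq
      linarith
    have hcs : (∑ k, y k) ^ 2 < (n : ℝ) * ∑ k, (y k) ^ 2 := cs_strict y hyij
    have hQ : 0 ≤ ∑ k, (y k) ^ 2 := Finset.sum_nonneg fun k _ => sq_nonneg _
    calc (0:ℝ) < ((n : ℝ) * ∑ k, (y k) ^ 2 - (∑ k, y k) ^ 2)
            / ((n : ℝ) * ∑ k, y k) := by
          apply div_pos (by linarith) (by positivity)
      _ = (1 / (n : ℝ)) * ∑ k, (ℓ k + β)⁻¹ +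
          (∑ k, ((ℓ k + β) ^ 2)⁻¹) / (∑ k, -1 / (ℓ k + β)) := by
          rw [Finset.sum_congr rfl (fun k _ => hyinv k),
            Finset.sum_congr rfl (fun k _ => hysq k)]
          rw [Finset.sum_neg_distrib]
          rw [show (∑ k, -1 / (ℓ k + β)) = ∑ k, y k from rfl]
          field_simp
          ring
  -- strict monotonicity of G on S
  have hSopen : IsOpen S := isOpen_iInter_of_finite fun i => isOpen_Iio
  have hSconv : Convex ℝ S := convex_iInter fun i => convex_Iio _
  have hmono : StrictMonoOn G S := by
    apply strictMonoOn_of_deriv_pos hSconv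
    · intro x hx
      exact ((hderiv x ((hmemS x).mp hx)).differentiableAt).continuousAt.continuousWithinAt
    · intro x hx
      rw [hSopen.interior_eq] at hx
      rw [(hderiv x ((hmemS x).mp hx)).deriv]
      exact hpos x ((hmemS x).mp hx)
  -- value of G at a root
  have hval : ∀ β : ℝ, (∀ i, β < -ℓ i) →
      ((1 / (n : ℝ)) * ∑ i, Real.log (-1 / (ℓ i + β)) -
        Real.log ((1 / (n : ℝ)) * ∑ i, -1 / (ℓ i + β)) + δ = 0) →
      G β = Real.log n + δ := by
    intro β hβ hroot
    have hne0 : ∀ i, ℓ i + β ≠ 0 := fun i => (hneg β hβ i).ne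
    have hlogterm : ∀ i : Fin n,
        Real.log (-1 / (ℓ i + β)) = -Real.log (-(ℓ i + β)) := by
      intro i
      rw [show -1 / (ℓ i + β) = (-(ℓ i + β))⁻¹ by
        rw [inv_neg, neg_div, one_div], Real.log_inv]
    rw [Finset.sum_congr rfl (fun i _ => hlogterm i), Finset.sum_neg_distrib,
      Real.log_mul (by positivity) (hSy β hβ).ne', one_div,
      Real.log_inv] at hroot
    rw [mul_neg] at hroot
    simp only [hGdef, one_div] at hroot ⊢
    linarith
  exact hmono.injOn ((hmemS β₁).mpr hβ₁) ((hmemS β₂).mpr hβ₂)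
    ((hval β₁ hβ₁ hroot₁).trans (hval β₂ hβ₂ hroot₂).symm)
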